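/- Let ω : ℝⁿ → (0,∞) be a positive measurable function such that 1/ω ∈ L¹(ℝⁿ) and ω satisfies the δ condition (G) for some 0 < δ < 1. Then the function ω^{1/(1−δ)} satisfies Beurling's condition (B), i.e. sup_{ξ∈ℝⁿ} ∫_{ℝⁿ} ω(ξ)^{1/(1−δ)}/(ω(ξ−η)^{1/(1−δ)} ω(η)^{1/(1−δ)}) dη < ∞. -/

import Mathlib

open MeasureTheory

/-- The δ condition (G) with parameter `0 < δ < 1`. -/
def SatisfiesDeltaCondition {n : ℕ} (ω : EuclideanSpace ℝ (Fin n) → ℝ) (δ : ℝ) : Prop :=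
  ∃ C : ℝ, 0 < C ∧ ∀ ξ η, ω ξ ≤ C * (ω η * ω (ξ - η) ^ δ + ω η ^ δ * ω (ξ - η))

/-- Auxiliary: from `x ≤ 2C·a^δ·b` with everything positive, bound the quotient. -/
lemma aux_quot_bound {C δ x a b : ℝ} (hC : 0 < C) (hδ₀ : 0 < δ) (hδ₁ : δ < 1)
    (hx : 0 < x) (ha : 0 < a) (hb : 0 < b)
    (h : x ≤ 2 * C * (a ^ δ * b)) :
    x ^ (1 - δ)⁻¹ / (b ^ (1 - δ)⁻¹ * a ^ (1 - δ)⁻¹) ≤ (2 * C) ^ (1 - δ)⁻¹ * a⁻¹ := by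
  set p := (1 - δ)⁻¹ with hp_def
  have h1δ : 0 < 1 - δ := by linarith
  have hp : 0 < p := inv_pos.2 h1δ
  have h2C : (0:ℝ) < 2 * C := by linarith
  have hxp : x ^ p ≤ (2 * C) ^ p * (a ^ (δ * p) * b ^ p) := by
    have := Real.rpow_le_rpow hx.le h hp.le
    calc x ^ p ≤ (2 * C * (a ^ δ * b)) ^ p := this
      _ = (2 * C) ^ p * (a ^ (δ * p) * b ^ p) := by
          rw [Real.mul_rpow h2C.le (by positivity), Real.mul_rpow (by positivity) hb.le,
            ← Real.rpow_mul ha.le]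
  have hbp : 0 < b ^ p := Real.rpow_pos_of_pos hb p
  have hap : 0 < a ^ p := Real.rpow_pos_of_pos ha p
  rw [div_le_iff₀ (by positivity)]
  calc x ^ p ≤ (2 * C) ^ p * (a ^ (δ * p) * b ^ p) := hxp
    _ = (2 * C) ^ p * a⁻¹ * (b ^ p * a ^ p) := by
        have hδp : δ * p = -1 + p := by
          have hne : (1 - δ) ≠ 0 := ne_of_gt h1δ
          rw [hp_def]
          field_simp
          ring
        have : a ^ (δ * p) = a⁻¹ * a ^ p := by
          rw [← Real.rpow_neg_one a, ← Real.rpow_add ha, hδp]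
        rw [this]; ring
  
/-- If `ω : ℝⁿ → (0,∞)` is measurable, `1/ω ∈ L¹(ℝⁿ)` and `ω` satisfies the δ condition
(G) for some `0 < δ < 1`, then `ω^(1/(1-δ))` satisfies Beurling's condition (B):
`sup_ξ ∫ ω(ξ)^(1/(1-δ)) / (ω(ξ-η)^(1/(1-δ)) * ω(η)^(1/(1-δ))) dη < ∞`. -/
theorem beurling_of_deltaCondition_of_integrableInv {n : ℕ}
    (ω : EuclideanSpace ℝ (Fin n) → ℝ) (δ : ℝ)
    (hω_pos : ∀ ξ, 0 < ω ξ) (hω_meas : Measurable ω)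
    (hint : Integrable (fun ξ => (ω ξ)⁻¹) volume)
    (hδ₀ : 0 < δ) (hδ₁ : δ < 1)
    (hG : SatisfiesDeltaCondition ω δ) :
    ∃ C : ℝ, 0 < C ∧ ∀ ξ,
      (∫⁻ η, ENNReal.ofReal (ω ξ ^ (1 - δ)⁻¹ /
        (ω (ξ - η) ^ (1 - δ)⁻¹ * ω η ^ (1 - δ)⁻¹)) ∂volume) ≤ ENNReal.ofReal C := by
  obtain ⟨C, hC, hGC⟩ := hG
  have h1δ : 0 < 1 - δ := by linarith
  set p := (1 - δ)⁻¹ with hp_def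
  have h2Cp : (0:ℝ) ≤ (2 * C) ^ p := Real.rpow_nonneg (by linarith) p
  -- pointwise bound
  have key : ∀ ξ η, ω ξ ^ p / (ω (ξ - η) ^ p * ω η ^ p) ≤
      (2 * C) ^ p * ((ω (ξ - η))⁻¹ + (ω η)⁻¹) := by
    intro ξ η
    set a := ω η
    set b := ω (ξ - η)
    have ha := hω_pos η
    have hb := hω_pos (ξ - η)
    have hx := hω_pos ξ
    have h := hGC ξ η
    rcases le_total (a * b ^ δ) (a ^ δ * b) with hcase | hcase
    · have h2 : ω ξ ≤ 2 * C * (a ^ δ * b) := by nlinarith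
      have := aux_quot_bound hC hδ₀ hδ₁ hx ha hb h2
      calc ω ξ ^ p / (b ^ p * a ^ p) ≤ (2 * C) ^ p * a⁻¹ := this
        _ ≤ (2 * C) ^ p * (b⁻¹ + a⁻¹) := by
            have : (0:ℝ) < b⁻¹ := by positivity
            nlinarith
    · have h2 : ω ξ ≤ 2 * C * (b ^ δ * a) := by nlinarith
      have := aux_quot_bound hC hδ₀ hδ₁ hx hb ha h2
      calc ω ξ ^ p / (b ^ p * a ^ p) = ω ξ ^ p / (a ^ p * b ^ p) := by ring_nf
        _ ≤ (2 * C) ^ p * b⁻¹ := this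
        _ ≤ (2 * C) ^ p * (b⁻¹ + a⁻¹) := by
            have : (0:ℝ) < a⁻¹ := by positivity
            nlinarith
  -- the integral of 1/ω
  set I := ∫⁻ η, ENNReal.ofReal ((ω η)⁻¹) ∂(volume : Measure (EuclideanSpace ℝ (Fin n)))
    with hI_def
  have hI_lt : I < ⊤ := hint.lintegral_lt_top
  have hmeas_inv : Measurable fun η : EuclideanSpace ℝ (Fin n) =>
      ENNReal.ofReal ((ω η)⁻¹) := (hω_meas.inv).ennreal_ofReal
  set K := ENNReal.ofReal ((2 * C) ^ p) * (I + I) with hK_def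
  have hK_lt : K < ⊤ := by
    apply ENNReal.mul_lt_top ENNReal.ofReal_lt_top
    exact ENNReal.add_lt_top.2 ⟨hI_lt, hI_lt⟩
  refine ⟨K.toReal + 1, by positivity, fun ξ => ?_⟩
  have step1 : (∫⁻ η, ENNReal.ofReal (ω ξ ^ p / (ω (ξ - η) ^ p * ω η ^ p)) ∂volume) ≤ K := by
    have hbound : ∀ η, ENNReal.ofReal (ω ξ ^ p / (ω (ξ - η) ^ p * ω η ^ p)) ≤
        ENNReal.ofReal ((2 * C) ^ p) *
          (ENNReal.ofReal ((ω (ξ - η))⁻¹) + ENNReal.ofReal ((ω η)⁻¹)) := by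
      intro η
      calc ENNReal.ofReal (ω ξ ^ p / (ω (ξ - η) ^ p * ω η ^ p))
          ≤ ENNReal.ofReal ((2 * C) ^ p * ((ω (ξ - η))⁻¹ + (ω η)⁻¹)) :=
            ENNReal.ofReal_le_ofReal (key ξ η)
        _ = ENNReal.ofReal ((2 * C) ^ p) *
            (ENNReal.ofReal ((ω (ξ - η))⁻¹) + ENNReal.ofReal ((ω η)⁻¹)) := by
            rw [ENNReal.ofReal_mul h2Cp,
              ENNReal.ofReal_add (inv_nonneg.2 (hω_pos _).le) (inv_nonneg.2 (hω_pos _).le)]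
    have hms : Measurable fun η : EuclideanSpace ℝ (Fin n) =>
        ENNReal.ofReal ((ω (ξ - η))⁻¹) := by fun_prop
    have htrans : (∫⁻ η, ENNReal.ofReal ((ω (ξ - η))⁻¹) ∂volume) = I := by
      simpa [Function.comp] using
        (Measure.measurePreserving_sub_left (volume : Measure (EuclideanSpace ℝ (Fin n)))
          ξ).lintegral_comp hmeas_inv
    calc (∫⁻ η, ENNReal.ofReal (ω ξ ^ p / (ω (ξ - η) ^ p * ω η ^ p)) ∂volume)
        ≤ ∫⁻ η, ENNReal.ofReal ((2 * C) ^ p) *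
            (ENNReal.ofReal ((ω (ξ - η))⁻¹) + ENNReal.ofReal ((ω η)⁻¹)) ∂volume :=
          lintegral_mono hbound
      _ = ENNReal.ofReal ((2 * C) ^ p) *
          ∫⁻ η, (ENNReal.ofReal ((ω (ξ - η))⁻¹) + ENNReal.ofReal ((ω η)⁻¹)) ∂volume :=
          lintegral_const_mul _ (hms.add hmeas_inv)
      _ = K := by
          rw [hK_def]
          congr 1
          rw [lintegral_add_left hms, htrans]
  refine le_trans step1 ?_
  conv_lhs => rw [← ENNReal.ofReal_toReal hK_lt.ne]
  exact ENNReal.ofReal_le_ofReal (by linarith)
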